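/- arXiv:0707.2591 — 12 statements merged into one kernel-verified Lean document; each statement's English description precedes it below -/
import Mathlib

section
/- Let f(x) = min_{r ≤ i ≤ n} (a_i + i·x) with a_i ∈ ℚ. If there is no x₀ ∈ ℚ with f(x₀) = a_i + i·x₀ (for some fixed index i), then there exists b < a_i such that the function g obtained by replacing a_i with b satisfies g(x) = f(x) for all x ∈ ℚ. -/
/-- If `a i` is not a least coefficient of the tropical polynomial, then it can be
lowered to some `b < a i` without changing the function. -/
theorem not_least_coeff_can_be_lowered (r n : ℤ) (hrn : r ≤ n) (a : ℤ → ℚ)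
    (i : ℤ) (hi : i ∈ Finset.Icc r n)
    (h : ¬ ∃ x₀ : ℚ, (Finset.Icc r n).inf' (Finset.nonempty_Icc.mpr hrn)
      (fun j => a j + (j : ℚ) * x₀) = a i + (i : ℚ) * x₀) :
    ∃ b : ℚ, b < a i ∧ ∀ x : ℚ,
      (Finset.Icc r n).inf' (Finset.nonempty_Icc.mpr hrn)
        (fun j => Function.update a i b j + (j : ℚ) * x) =
      (Finset.Icc r n).inf' (Finset.nonempty_Icc.mpr hrn)
        (fun j => a j + (j : ℚ) * x) := by
  push_neg at h
  set s := Finset.Icc r n with hs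
  have hne : s.Nonempty := Finset.nonempty_Icc.mpr hrn
  -- Step 1: at every x, some other term is strictly smaller than term i
  have key : ∀ x : ℚ, ∃ j ∈ s, j ≠ i ∧ a j + (j : ℚ) * x < a i + (i : ℚ) * x := by
    intro x
    obtain ⟨j, hj, hjv⟩ := Finset.exists_mem_eq_inf' hne (fun j => a j + (j : ℚ) * x)
    have hle : s.inf' hne (fun j => a j + (j : ℚ) * x) ≤ a i + (i : ℚ) * x :=
      Finset.inf'_le _ hi
    have hlt : s.inf' hne (fun j => a j + (j : ℚ) * x) < a i + (i : ℚ) * x :=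
      lt_of_le_of_ne hle (h x)
    refine ⟨j, hj, ?_, by rw [← hjv]; exact hlt⟩
    rintro rfl
    exact h x hjv
  -- Step 2: there is p ∈ s with p < i, and q ∈ s with i < q
  set X := s.sup' hne (fun j => a i - a j) with hX
  have hX0 : (0 : ℚ) ≤ X := by
    have h0 : a i - a i ≤ X := by rw [hX]; exact Finset.le_sup' (fun j => a i - a j) hi
    linarith
  have hip : ∃ p ∈ s, p < i := by
    obtain ⟨j, hj, hji, hjlt⟩ := key X
    refine ⟨j, hj, ?_⟩
    rcases lt_trichotomy j i with h1 | h1 | h1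
    · exact h1
    · exact absurd h1 hji
    · exfalso
      have h2 : a i - a j ≤ X := by rw [hX]; exact Finset.le_sup' (fun j => a i - a j) hj
      have h3 : (1 : ℚ) ≤ (j : ℚ) - (i : ℚ) := by
        have h4 : i + 1 ≤ j := by omega
        have h5 : ((i : ℚ)) + 1 ≤ (j : ℚ) := by exact_mod_cast h4
        linarith
      nlinarith
  have hiq : ∃ q ∈ s, i < q := by
    obtain ⟨j, hj, hji, hjlt⟩ := key (-X)
    refine ⟨j, hj, ?_⟩
    rcases lt_trichotomy i j with h1 | h1 | h1
    · exact h1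
    · exact absurd h1.symm hji
    · exfalso
      have h2 : a i - a j ≤ X := by rw [hX]; exact Finset.le_sup' (fun j => a i - a j) hj
      have h3 : (1 : ℚ) ≤ (i : ℚ) - (j : ℚ) := by
        have h4 : j + 1 ≤ i := by omega
        have h5 : ((j : ℚ)) + 1 ≤ (i : ℚ) := by exact_mod_cast h4
        linarith
      nlinarith
  -- Step 3: there is a pair p < i < q whose "feasible intervals" are disjoint
  have hpq : ∃ p ∈ s, ∃ q ∈ s, p < i ∧ i < q ∧
      (a p - a i) / ((i : ℚ) - (p : ℚ)) < (a i - a q) / ((q : ℚ) - (i : ℚ)) := by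
    by_contra hcon
    push_neg at hcon
    obtain ⟨q₀, hq₀, hq₀i⟩ := hiq
    set Q := s.filter (fun j => i < j) with hQ
    have hQne : Q.Nonempty := ⟨q₀, Finset.mem_filter.mpr ⟨hq₀, hq₀i⟩⟩
    set x₀ := Q.sup' hQne (fun q => (a i - a q) / ((q : ℚ) - (i : ℚ))) with hx₀
    obtain ⟨q₁, hq₁, hq₁v⟩ := Finset.exists_mem_eq_sup' hQne
      (fun q => (a i - a q) / ((q : ℚ) - (i : ℚ)))
    have hq₁s : q₁ ∈ s := (Finset.mem_filter.mp hq₁).1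
    have hq₁i : i < q₁ := (Finset.mem_filter.mp hq₁).2
    have hall : ∀ j ∈ s, a i + (i : ℚ) * x₀ ≤ a j + (j : ℚ) * x₀ := by
      intro j hj
      rcases lt_trichotomy j i with h1 | h1 | h1
      · -- j < i : use hcon with pair (j, q₁)
        have hUL := hcon j hj q₁ hq₁s h1 hq₁i
        have hipos : (0 : ℚ) < (i : ℚ) - (j : ℚ) := by
          have h5 : ((j : ℚ)) < (i : ℚ) := by exact_mod_cast h1
          linarith
        have hx₀le : x₀ ≤ (a j - a i) / ((i : ℚ) - (j : ℚ)) := by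
          rw [hx₀, hq₁v]; exact hUL
        have := (le_div_iff₀ hipos).mp hx₀le
        nlinarith
      · rw [h1]
      · -- i < j : j ∈ Q, so L_j ≤ x₀
        have hjQ : j ∈ Q := Finset.mem_filter.mpr ⟨hj, h1⟩
        have hjpos : (0 : ℚ) < (j : ℚ) - (i : ℚ) := by
          have h5 : ((i : ℚ)) < (j : ℚ) := by exact_mod_cast h1
          linarith
        have hLe : (a i - a j) / ((j : ℚ) - (i : ℚ)) ≤ x₀ := by
          rw [hx₀]; exact Finset.le_sup' (fun q => (a i - a q) / ((q : ℚ) - (i : ℚ))) hjQ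
        have := (div_le_iff₀ hjpos).mp hLe
        nlinarith
    have : s.inf' hne (fun j => a j + (j : ℚ) * x₀) = a i + (i : ℚ) * x₀ :=
      le_antisymm (Finset.inf'_le _ hi) (Finset.le_inf' _ _ hall)
    exact h x₀ this
  obtain ⟨p, hp, q, hq, hpi, hiq', hUL⟩ := hpq
  have hippos : (0 : ℚ) < (i : ℚ) - (p : ℚ) := by
    have h5 : ((p : ℚ)) < (i : ℚ) := by exact_mod_cast hpi
    linarith
  have hqipos : (0 : ℚ) < (q : ℚ) - (i : ℚ) := by
    have h5 : ((i : ℚ)) < (q : ℚ) := by exact_mod_cast hiq'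
    linarith
  set Up := (a p - a i) / ((i : ℚ) - (p : ℚ)) with hUp
  set Lq := (a i - a q) / ((q : ℚ) - (i : ℚ)) with hLq
  set w := (Up + Lq) / 2 with hw
  have hw1 : Up < w := by rw [hw]; linarith
  have hw2 : w < Lq := by rw [hw]; linarith
  set β := max (a p - a i + ((p : ℚ) - (i : ℚ)) * w) (a q - a i + ((q : ℚ) - (i : ℚ)) * w)
    with hβdef
  have hβp : a p - a i + ((p : ℚ) - (i : ℚ)) * w < 0 := by
    have h1 : Up * ((i : ℚ) - (p : ℚ)) = a p - a i := by
      rw [hUp]; field_simp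
    nlinarith
  have hβq : a q - a i + ((q : ℚ) - (i : ℚ)) * w < 0 := by
    have h1 : Lq * ((q : ℚ) - (i : ℚ)) = a i - a q := by
      rw [hLq]; field_simp
    nlinarith
  have hβ : β < 0 := max_lt hβp hβq
  refine ⟨a i + β, by linarith, ?_⟩
  intro x
  -- key2 : some other term is ≤ the lowered i-term everywhere
  have key2 : ∃ j ∈ s, j ≠ i ∧ a j + (j : ℚ) * x ≤ (a i + β) + (i : ℚ) * x := by
    rcases le_total x w with hx | hx
    · refine ⟨q, hq, by omega, ?_⟩
      have h1 : ((q : ℚ) - (i : ℚ)) * x ≤ ((q : ℚ) - (i : ℚ)) * w :=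
        mul_le_mul_of_nonneg_left hx (le_of_lt hqipos)
      have h2 : a q - a i + ((q : ℚ) - (i : ℚ)) * w ≤ β := le_max_right _ _
      nlinarith
    · refine ⟨p, hp, by omega, ?_⟩
      have h1 : ((p : ℚ) - (i : ℚ)) * x ≤ ((p : ℚ) - (i : ℚ)) * w := by
        nlinarith
      have h2 : a p - a i + ((p : ℚ) - (i : ℚ)) * w ≤ β := le_max_left _ _
      nlinarith
  obtain ⟨j', hj', hj'i, hj'le⟩ := key2
  apply le_antisymm
  · -- LHS ≤ RHS
    obtain ⟨j₀, hj₀, hj₀v⟩ := Finset.exists_mem_eq_inf' hne (fun j => a j + (j : ℚ) * x)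
    rw [hj₀v]
    by_cases hji : j₀ = i
    · rw [hji]
      calc s.inf' hne (fun j => Function.update a i (a i + β) j + (j : ℚ) * x)
          ≤ Function.update a i (a i + β) j' + (j' : ℚ) * x := Finset.inf'_le _ hj'
        _ = a j' + (j' : ℚ) * x := by rw [Function.update_of_ne hj'i]
        _ ≤ (a i + β) + (i : ℚ) * x := hj'le
        _ ≤ a i + (i : ℚ) * x := by linarith
    · calc s.inf' hne (fun j => Function.update a i (a i + β) j + (j : ℚ) * x)
          ≤ Function.update a i (a i + β) j₀ + (j₀ : ℚ) * x := Finset.inf'_le _ hj₀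
        _ = a j₀ + (j₀ : ℚ) * x := by rw [Function.update_of_ne hji]
  · -- RHS ≤ LHS
    apply Finset.le_inf'
    intro j hj
    by_cases hji : j = i
    · rw [hji, Function.update_self]
      calc s.inf' hne (fun j => a j + (j : ℚ) * x) ≤ a j' + (j' : ℚ) * x :=
            Finset.inf'_le _ hj'
        _ ≤ (a i + β) + (i : ℚ) * x := hj'le
    · rw [Function.update_of_ne hji]
      exact Finset.inf'_le _ hj
end

section
/- Two least-coefficient tropical polynomials (with the same index range r, ..., n and finite rational coefficients) are functionally equivalent if and only if they have equal coefficients. That is, if every coefficient of f and of g is a least coefficient and f(x) = g(x) for all x ∈ ℚ, then a_i = b_i for all i. -/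
/-- Two least-coefficient tropical polynomials are functionally equivalent
iff they have equal coefficients. -/
theorem least_coeff_poly_funext_iff_eq (r n : ℤ) (hrn : r ≤ n) (a b : ℤ → ℚ)
    (ha : ∀ j ∈ Finset.Icc r n, ∃ x₀ : ℚ,
      (Finset.Icc r n).inf' (Finset.nonempty_Icc.mpr hrn)
        (fun i => a i + (i : ℚ) * x₀) = a j + (j : ℚ) * x₀)
    (hb : ∀ j ∈ Finset.Icc r n, ∃ x₀ : ℚ,
      (Finset.Icc r n).inf' (Finset.nonempty_Icc.mpr hrn)
        (fun i => b i + (i : ℚ) * x₀) = b j + (j : ℚ) * x₀) :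
    (∀ x : ℚ,
      (Finset.Icc r n).inf' (Finset.nonempty_Icc.mpr hrn)
        (fun i => a i + (i : ℚ) * x) =
      (Finset.Icc r n).inf' (Finset.nonempty_Icc.mpr hrn)
        (fun i => b i + (i : ℚ) * x)) ↔
    (∀ j ∈ Finset.Icc r n, a j = b j) := by
  constructor
  · intro h j hj
    obtain ⟨x, hx⟩ := ha j hj
    obtain ⟨y, hy⟩ := hb j hj
    have h1 : a j + (j : ℚ) * x ≤ b j + (j : ℚ) * x := by
      rw [← hx, h x]
      exact Finset.inf'_le _ hj
    have h2 : b j + (j : ℚ) * y ≤ a j + (j : ℚ) * y := by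
      rw [← hy, ← h y]
      exact Finset.inf'_le _ hj
    have := add_le_add_right h1 (-(j : ℚ) * x)
    have := add_le_add_right h2 (-(j : ℚ) * y)
    linarith
  · intro h x
    apply Finset.inf'_congr _ rfl
    intro j hj
    rw [h j hj]
end

section
/- Given a tropical polynomial f with coefficients a_r, ..., a_n ∈ ℚ, define b_j = min( {a_j} ∪ { (a_i·(k−j) + a_k·(j−i))/(k−i) : r ≤ i < j < k ≤ n } ). Then the tropical polynomial g with coefficients b_r, ..., b_n is functionally equivalent to f: for all x ∈ ℚ, min_i (b_i + i·x) = min_i (a_i + i·x). -/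
/-- The least-coefficient formula gives a functionally equivalent polynomial. -/
theorem lcp_formula_funequiv (r n : ℤ) (hrn : r ≤ n) (a b : ℤ → ℚ)
    (hb : ∀ j ∈ Finset.Icc r n, b j =
      (insert (a j)
        ((((Finset.Icc r n) ×ˢ (Finset.Icc r n)).filter
            (fun p => p.1 < j ∧ j < p.2)).image
          (fun p : ℤ × ℤ =>
            (a p.1 * ((p.2 : ℚ) - (j : ℚ)) + a p.2 * ((j : ℚ) - (p.1 : ℚ))) /
              ((p.2 : ℚ) - (p.1 : ℚ))))).min'
        (Finset.insert_nonempty _ _)) :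
    ∀ x : ℚ,
      (Finset.Icc r n).inf' (Finset.nonempty_Icc.mpr hrn)
        (fun i => b i + (i : ℚ) * x) =
      (Finset.Icc r n).inf' (Finset.nonempty_Icc.mpr hrn)
        (fun i => a i + (i : ℚ) * x) := by
  intro x
  set s := Finset.Icc r n with hs
  have hne : s.Nonempty := Finset.nonempty_Icc.mpr hrn
  apply le_antisymm
  · apply Finset.le_inf'
    intro j hj
    have hle : b j ≤ a j := by
      rw [hb j hj]
      exact Finset.min'_le _ _ (Finset.mem_insert_self _ _)
    calc s.inf' hne (fun i => b i + (i : ℚ) * x) ≤ b j + (j : ℚ) * x :=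
          Finset.inf'_le _ hj
      _ ≤ a j + (j : ℚ) * x := by linarith
  · apply Finset.le_inf'
    intro j hj
    have hmem := Finset.min'_mem (insert (a j)
        (((s ×ˢ s).filter (fun p => p.1 < j ∧ j < p.2)).image
          (fun p : ℤ × ℤ =>
            (a p.1 * ((p.2 : ℚ) - (j : ℚ)) + a p.2 * ((j : ℚ) - (p.1 : ℚ))) /
              ((p.2 : ℚ) - (p.1 : ℚ))))) (Finset.insert_nonempty _ _)
    rw [← hb j hj, Finset.mem_insert] at hmem
    rcases hmem with h | h
    · rw [h]
      exact Finset.inf'_le _ hj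
    · rw [Finset.mem_image] at h
      obtain ⟨⟨i, k⟩, hp, hval⟩ := h
      rw [Finset.mem_filter, Finset.mem_product] at hp
      obtain ⟨⟨hi, hk⟩, hij, hjk⟩ := hp
      have h1 : s.inf' hne (fun i => a i + (i : ℚ) * x) ≤ a i + (i : ℚ) * x :=
        Finset.inf'_le _ hi
      have h2 : s.inf' hne (fun i => a i + (i : ℚ) * x) ≤ a k + (k : ℚ) * x :=
        Finset.inf'_le _ hk
      have hijq : (i : ℚ) < (j : ℚ) := by exact_mod_cast hij
      have hjkq : (j : ℚ) < (k : ℚ) := by exact_mod_cast hjk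
      have hikq : (0 : ℚ) < (k : ℚ) - (i : ℚ) := by linarith
      set m := s.inf' hne (fun i => a i + (i : ℚ) * x) with hm
      rw [← hval]
      simp only
      rw [← sub_le_iff_le_add, le_div_iff₀ hikq]
      nlinarith [h1, h2, hijq, hjkq]
end

section
/- Given a tropical polynomial f with coefficients a_r, ..., a_n ∈ ℚ, define b_j = min( {a_j} ∪ { (a_i·(k−j) + a_k·(j−i))/(k−i) : r ≤ i < j < k ≤ n } ). Then every b_j is a least coefficient of the polynomial g with coefficients b_r, ..., b_n: for each j there exists x₀ ∈ ℚ such that min_i (b_i + i·x₀) = b_j + j·x₀. -/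
/-- The least-coefficient formula produces a least-coefficient polynomial. -/
theorem lcp_formula_is_least (r n : ℤ) (hrn : r ≤ n) (a b : ℤ → ℚ)
    (hb : ∀ j ∈ Finset.Icc r n, b j =
      (insert (a j)
        ((((Finset.Icc r n) ×ˢ (Finset.Icc r n)).filter
            (fun p => p.1 < j ∧ j < p.2)).image
          (fun p : ℤ × ℤ =>
            (a p.1 * ((p.2 : ℚ) - (j : ℚ)) + a p.2 * ((j : ℚ) - (p.1 : ℚ))) /
              ((p.2 : ℚ) - (p.1 : ℚ))))).min'
        (Finset.insert_nonempty _ _)) :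
    ∀ j ∈ Finset.Icc r n, ∃ x₀ : ℚ,
      (Finset.Icc r n).inf' (Finset.nonempty_Icc.mpr hrn)
        (fun i => b i + (i : ℚ) * x₀) = b j + (j : ℚ) * x₀ := by
  intro j hj
  obtain ⟨hrj, hjn⟩ := Finset.mem_Icc.mp hj
  -- b m ≤ a m for every m in range
  have hbla : ∀ m ∈ Finset.Icc r n, b m ≤ a m := by
    intro m hm
    rw [hb m hm]
    exact Finset.min'_le _ _ (Finset.mem_insert_self _ _)
  -- b j ≤ every chord value
  have chord_ge : ∀ i k : ℤ, i ∈ Finset.Icc r n → k ∈ Finset.Icc r n → i < j → j < k →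
      b j ≤ (a i * ((k : ℚ) - (j : ℚ)) + a k * ((j : ℚ) - (i : ℚ))) / ((k : ℚ) - (i : ℚ)) := by
    intro i k hi hk hij hjk
    rw [hb j hj]
    refine Finset.min'_le _ _ (Finset.mem_insert_of_mem (Finset.mem_image.mpr ?_))
    exact ⟨(i, k), Finset.mem_filter.mpr ⟨Finset.mem_product.mpr ⟨hi, hk⟩, ⟨hij, hjk⟩⟩, rfl⟩
  -- Lemma 1: every affine lower bound of a is an affine lower bound of b
  have lem1 : ∀ m ∈ Finset.Icc r n, ∀ x c : ℚ,
      (∀ i ∈ Finset.Icc r n, c ≤ a i + (i : ℚ) * x) → c ≤ b m + (m : ℚ) * x := by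
    intro m hm x c hc
    rw [hb m hm]
    have h2 : c - (m : ℚ) * x ≤ (insert (a m)
        ((((Finset.Icc r n) ×ˢ (Finset.Icc r n)).filter
            (fun p => p.1 < m ∧ m < p.2)).image
          (fun p : ℤ × ℤ =>
            (a p.1 * ((p.2 : ℚ) - (m : ℚ)) + a p.2 * ((m : ℚ) - (p.1 : ℚ))) /
              ((p.2 : ℚ) - (p.1 : ℚ))))).min' (Finset.insert_nonempty _ _) := by
      apply Finset.le_min'
      intro e he
      rcases Finset.mem_insert.mp he with rfl | he'
      · have := hc m hm; linarith
      · obtain ⟨⟨i, k⟩, hp, rfl⟩ := Finset.mem_image.mp he'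
        obtain ⟨hpm, him, hmk⟩ := Finset.mem_filter.mp hp
        obtain ⟨hi, hk⟩ := Finset.mem_product.mp hpm
        have himq : (i : ℚ) < (m : ℚ) := by exact_mod_cast him
        have hmkq : (m : ℚ) < (k : ℚ) := by exact_mod_cast hmk
        have hki : (0 : ℚ) < (k : ℚ) - (i : ℚ) := by linarith
        rw [le_div_iff₀ hki]
        have h1 := hc i hi
        have h2 := hc k hk
        nlinarith [mul_nonneg (by linarith : (0:ℚ) ≤ a i + (i:ℚ)*x - c) (by linarith : (0:ℚ) ≤ (k:ℚ) - (m:ℚ)),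
          mul_nonneg (by linarith : (0:ℚ) ≤ a k + (k:ℚ)*x - c) (by linarith : (0:ℚ) ≤ (m:ℚ) - (i:ℚ))]
    linarith
  -- Key: find x₀ so that the line through (j, b j) with slope -x₀ is below all points of a
  have key : ∃ x₀ : ℚ, ∀ m ∈ Finset.Icc r n, b j + (j : ℚ) * x₀ ≤ a m + (m : ℚ) * x₀ := by
    have hbjmem : b j ∈ insert (a j)
        ((((Finset.Icc r n) ×ˢ (Finset.Icc r n)).filter
            (fun p => p.1 < j ∧ j < p.2)).image
          (fun p : ℤ × ℤ =>
            (a p.1 * ((p.2 : ℚ) - (j : ℚ)) + a p.2 * ((j : ℚ) - (p.1 : ℚ))) /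
              ((p.2 : ℚ) - (p.1 : ℚ)))) := by
      rw [hb j hj]; exact Finset.min'_mem _ _
    rcases Finset.mem_insert.mp hbjmem with hbj | hmem
    · -- Case A : b j = a j
      by_cases hjn' : j < n
      · -- use the maximal right slope from j
        have hne : (Finset.Icc (j+1) n).Nonempty := Finset.nonempty_Icc.mpr (by omega)
        set x₀ := (Finset.Icc (j+1) n).sup' hne (fun k => (a j - a k) / ((k : ℚ) - (j : ℚ))) with hx₀def
        obtain ⟨k₀, hk₀, hx₀⟩ := Finset.exists_mem_eq_sup' hne (fun k => (a j - a k) / ((k : ℚ) - (j : ℚ)))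
        obtain ⟨hk₀1, hk₀2⟩ := Finset.mem_Icc.mp hk₀
        have hjk₀q : (j : ℚ) < (k₀ : ℚ) := by exact_mod_cast (by omega : j < k₀)
        refine ⟨x₀, ?_⟩
        intro m hm
        obtain ⟨hm1, hm2⟩ := Finset.mem_Icc.mp hm
        rcases lt_trichotomy m j with hmj | rfl | hjm
        · -- m < j : use the chord (m, k₀)
          have hk₀s : k₀ ∈ Finset.Icc r n := Finset.mem_Icc.mpr ⟨by omega, hk₀2⟩
          have hc := chord_ge m k₀ hm hk₀s hmj (by omega)
          have hmjq : (m : ℚ) < (j : ℚ) := by exact_mod_cast hmj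
          have hk₀m : (0 : ℚ) < (k₀ : ℚ) - (m : ℚ) := by linarith
          have hk₀j : (0 : ℚ) < (k₀ : ℚ) - (j : ℚ) := by linarith
          rw [le_div_iff₀ hk₀m] at hc
          have hx₀' : x₀ * ((k₀ : ℚ) - (j : ℚ)) = a j - a k₀ := by
            rw [hx₀def, hx₀]; exact div_mul_cancel₀ _ (ne_of_gt hk₀j)
          rw [hbj] at hc ⊢
          have hgoal : ((j : ℚ) - (m : ℚ)) * x₀ ≤ a m - a j := by
            rw [← sub_nonneg]
            have : (a m - a j) * ((k₀ : ℚ) - (j : ℚ)) - ((j : ℚ) - (m : ℚ)) * (x₀ * ((k₀ : ℚ) - (j : ℚ))) ≥ 0 := by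
              rw [hx₀']; nlinarith [hc]
            nlinarith [this, hk₀j]
          linarith
        · linarith
        · -- m > j : x₀ dominates the slope to m
          have hmmem : m ∈ Finset.Icc (j+1) n := Finset.mem_Icc.mpr ⟨by omega, hm2⟩
          have hle : (a j - a m) / ((m : ℚ) - (j : ℚ)) ≤ x₀ :=
            Finset.le_sup' (fun k => (a j - a k) / ((k : ℚ) - (j : ℚ))) hmmem
          have hmjq : (j : ℚ) < (m : ℚ) := by exact_mod_cast hjm
          rw [div_le_iff₀ (by linarith : (0:ℚ) < (m : ℚ) - (j : ℚ))] at hle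
          rw [hbj]
          nlinarith [hle]
      · -- j = n
        have hjn'' : j = n := by omega
        by_cases hrj' : r < j
        · have hne : (Finset.Icc r (j-1)).Nonempty := Finset.nonempty_Icc.mpr (by omega)
          set x₀ := (Finset.Icc r (j-1)).inf' hne (fun m => (a m - a j) / ((j : ℚ) - (m : ℚ))) with hx₀def
          refine ⟨x₀, ?_⟩
          intro m hm
          obtain ⟨hm1, hm2⟩ := Finset.mem_Icc.mp hm
          rcases eq_or_lt_of_le (by omega : m ≤ j) with rfl | hmj
          · linarith
          · have hmmem : m ∈ Finset.Icc r (j-1) := Finset.mem_Icc.mpr ⟨hm1, by omega⟩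
            have hle : x₀ ≤ (a m - a j) / ((j : ℚ) - (m : ℚ)) :=
              Finset.inf'_le (fun m => (a m - a j) / ((j : ℚ) - (m : ℚ))) hmmem
            have hmjq : (m : ℚ) < (j : ℚ) := by exact_mod_cast hmj
            rw [le_div_iff₀ (by linarith : (0:ℚ) < (j : ℚ) - (m : ℚ))] at hle
            rw [hbj]
            nlinarith [hle]
        · -- r = j = n : singleton
          refine ⟨0, ?_⟩
          intro m hm
          obtain ⟨hm1, hm2⟩ := Finset.mem_Icc.mp hm
          have hmj : m = j := by omega
          simp only [hmj]
          linarith [hbla j hj]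
    · -- Case B : b j is a chord value at (i, k)
      obtain ⟨⟨i, k⟩, hp, heq⟩ := Finset.mem_image.mp hmem
      obtain ⟨hpm, hij, hjk⟩ := Finset.mem_filter.mp hp
      obtain ⟨hi, hk⟩ := Finset.mem_product.mp hpm
      have hijq : (i : ℚ) < (j : ℚ) := by exact_mod_cast hij
      have hjkq : (j : ℚ) < (k : ℚ) := by exact_mod_cast hjk
      have hki : (0 : ℚ) < (k : ℚ) - (i : ℚ) := by linarith
      obtain ⟨x₀, hx₀'⟩ : ∃ x : ℚ, x * ((k : ℚ) - (i : ℚ)) = a i - a k :=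
        ⟨(a i - a k) / ((k : ℚ) - (i : ℚ)), by field_simp⟩
      have hbj' : b j * ((k : ℚ) - (i : ℚ)) =
          a i * ((k : ℚ) - (j : ℚ)) + a k * ((j : ℚ) - (i : ℚ)) := by
        rw [← heq]; field_simp
      have h1 : b j = a k + ((k : ℚ) - (j : ℚ)) * x₀ := by
        apply mul_right_cancel₀ (ne_of_gt hki)
        linear_combination hbj' - ((k : ℚ) - (j : ℚ)) * hx₀'
      have h2 : b j = a i + ((i : ℚ) - (j : ℚ)) * x₀ := by
        apply mul_right_cancel₀ (ne_of_gt hki)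
        linear_combination hbj' - ((i : ℚ) - (j : ℚ)) * hx₀'
      refine ⟨x₀, ?_⟩
      intro m hm
      obtain ⟨hm1, hm2⟩ := Finset.mem_Icc.mp hm
      rcases lt_trichotomy m j with hmj | heqj | hjm
      · -- m < j : chord (m, k)
        have hc := chord_ge m k hm hk hmj hjk
        have hmjq : (m : ℚ) < (j : ℚ) := by exact_mod_cast hmj
        have hkm : (0 : ℚ) < (k : ℚ) - (m : ℚ) := by linarith
        have hkj : (0 : ℚ) < (k : ℚ) - (j : ℚ) := by linarith
        rw [le_div_iff₀ hkm] at hc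
        rw [h1] at hc
        have h4 : a k + ((k : ℚ) - (m : ℚ)) * x₀ ≤ a m := by
          have h5 : (a k + ((k : ℚ) - (m : ℚ)) * x₀) * ((k : ℚ) - (j : ℚ)) ≤
              a m * ((k : ℚ) - (j : ℚ)) := by nlinarith [hc]
          exact le_of_mul_le_mul_right h5 hkj
        rw [h1]
        nlinarith [h4]
      · rw [heqj]; linarith [hbla j hj]
      · -- m > j : chord (i, m)
        have hc := chord_ge i m hi hm hij hjm
        have hjmq : (j : ℚ) < (m : ℚ) := by exact_mod_cast hjm
        have hmi : (0 : ℚ) < (m : ℚ) - (i : ℚ) := by linarith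
        have hji : (0 : ℚ) < (j : ℚ) - (i : ℚ) := by linarith
        rw [le_div_iff₀ hmi] at hc
        rw [h2] at hc
        have h4 : a i + ((i : ℚ) - (m : ℚ)) * x₀ ≤ a m := by
          have h5 : (a i + ((i : ℚ) - (m : ℚ)) * x₀) * ((j : ℚ) - (i : ℚ)) ≤
              a m * ((j : ℚ) - (i : ℚ)) := by nlinarith [hc]
          exact le_of_mul_le_mul_right h5 hji
        rw [h2]
        nlinarith [h4]
  obtain ⟨x₀, hx₀⟩ := key
  refine ⟨x₀, le_antisymm (Finset.inf'_le _ hj) (Finset.le_inf' _ _ ?_)⟩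
  intro m hm
  exact lem1 m hm x₀ _ hx₀
end

section
/- Every tropical polynomial function has a unique least-coefficient representative: for any coefficients a_r, ..., a_n ∈ ℚ there exists exactly one tuple b_r, ..., b_n ∈ ℚ such that all b_j are least coefficients of the polynomial they define and min_i (b_i + i·x) = min_i (a_i + i·x) for all x ∈ ℚ. -/
private lemma inf'_sub_const (S : Finset ℤ) (hS : S.Nonempty) (u : ℤ → ℚ) (k : ℚ) :
    S.inf' hS (fun i => u i - k) = S.inf' hS u - k := by
  apply le_antisymm
  · obtain ⟨i, hi, hieq⟩ := S.exists_mem_eq_inf' hS u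
    calc S.inf' hS (fun i => u i - k) ≤ u i - k := Finset.inf'_le _ hi
      _ = _ := by rw [hieq]
  · apply Finset.le_inf'
    intro i hi
    have h : S.inf' hS u ≤ u i := Finset.inf'_le u hi
    linarith

private lemma attain (S : Finset ℤ) (hS : S.Nonempty) (c m : ℤ → ℚ)
    (h1 : ∃ p ∈ S, 0 ≤ m p) (h2 : ∃ q ∈ S, m q ≤ 0) :
    ∃ x₀ : ℚ, ∀ x : ℚ,
      S.inf' hS (fun i => c i + m i * x) ≤ S.inf' hS (fun i => c i + m i * x₀) := by
  classical
  obtain ⟨p₀, hp₀S, hp₀⟩ := h1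
  obtain ⟨q₀, hq₀S, hq₀⟩ := h2
  set P : Finset ℤ := S.filter (fun i => 0 ≤ m i) with hPdef
  set Q : Finset ℤ := S.filter (fun i => m i ≤ 0) with hQdef
  have hPQne : (P ×ˢ Q).Nonempty :=
    ⟨(p₀, q₀), Finset.mem_product.mpr
      ⟨Finset.mem_filter.mpr ⟨hp₀S, hp₀⟩, Finset.mem_filter.mpr ⟨hq₀S, hq₀⟩⟩⟩
  set w : ℤ × ℤ → ℚ := fun pq =>
    if m pq.1 = m pq.2 then min (c pq.1) (c pq.2)
    else (m pq.1 * c pq.2 - m pq.2 * c pq.1) / (m pq.1 - m pq.2) with hwdef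
  set W : ℚ := (P ×ˢ Q).inf' hPQne w with hWdef
  -- (a): the function is bounded above by W
  have ha : ∀ x : ℚ, S.inf' hS (fun i => c i + m i * x) ≤ W := by
    intro x
    apply Finset.le_inf'
    rintro ⟨p, q⟩ hpq
    rw [Finset.mem_product] at hpq
    have hpS : p ∈ S := (Finset.mem_filter.mp hpq.1).1
    have hpm : 0 ≤ m p := (Finset.mem_filter.mp hpq.1).2
    have hqS : q ∈ S := (Finset.mem_filter.mp hpq.2).1
    have hqm : m q ≤ 0 := (Finset.mem_filter.mp hpq.2).2
    have hgp : S.inf' hS (fun i => c i + m i * x) ≤ c p + m p * x := Finset.inf'_le _ hpS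
    have hgq : S.inf' hS (fun i => c i + m i * x) ≤ c q + m q * x := Finset.inf'_le _ hqS
    by_cases heq : m p = m q
    · have h0 : m p = 0 := le_antisymm (heq ▸ hqm) hpm
      have h0' : m q = 0 := heq ▸ h0
      rw [h0] at hgp
      rw [h0'] at hgq
      simp only [zero_mul, add_zero] at hgp hgq
      simp only [hwdef, if_pos heq, le_min_iff]
      exact ⟨hgp, hgq⟩
    · have hlt : m q < m p := lt_of_le_of_ne (hqm.trans hpm) (Ne.symm heq)
      simp only [hwdef, if_neg heq]
      rw [le_div_iff₀ (by linarith)]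
      nlinarith
  -- zero-slope lines are above W
  have hzero : ∀ i ∈ S, m i = 0 → W ≤ c i := by
    intro i hiS hi0
    have hmem : (i, i) ∈ P ×ˢ Q := Finset.mem_product.mpr
      ⟨Finset.mem_filter.mpr ⟨hiS, hi0.ge⟩, Finset.mem_filter.mpr ⟨hiS, hi0.le⟩⟩
    have h : W ≤ w (i, i) := Finset.inf'_le w hmem
    simpa [hwdef] using h
  -- key comparison of the points where lines reach level W
  have hkey : ∀ p ∈ S, 0 < m p → ∀ q ∈ S, m q < 0 →
      (W - c p) / m p ≤ (W - c q) / m q := by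
    intro p hpS hp q hqS hq
    have hmem : (p, q) ∈ P ×ˢ Q := Finset.mem_product.mpr
      ⟨Finset.mem_filter.mpr ⟨hpS, hp.le⟩, Finset.mem_filter.mpr ⟨hqS, hq.le⟩⟩
    have hne : m p ≠ m q := by linarith
    have hWle : W ≤ (m p * c q - m q * c p) / (m p - m q) := by
      have h : W ≤ w (p, q) := Finset.inf'_le w hmem
      simpa [hwdef, hne] using h
    rw [le_div_iff₀ (by linarith)] at hWle
    have hp0 : m p ≠ 0 := ne_of_gt hp
    have hq0 : m q ≠ 0 := ne_of_lt hq
    have e1 : m p * ((W - c p) / m p) = W - c p := by field_simp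
    have e2 : m q * ((W - c q) / m q) = W - c q := by field_simp
    by_contra hcon
    push_neg at hcon
    have hmm : m p * m q < 0 := mul_neg_of_pos_of_neg hp hq
    nlinarith [e1, e2, hWle, mul_pos (sub_pos.mpr hcon) (neg_pos.mpr hmm)]
  -- construction of the maximizer
  have hb : ∃ x₀ : ℚ, ∀ i ∈ S, W ≤ c i + m i * x₀ := by
    by_cases hPos : (S.filter (fun i => 0 < m i)).Nonempty
    · refine ⟨(S.filter (fun i => 0 < m i)).sup' hPos (fun p => (W - c p) / m p), ?_⟩
      intro i hiS
      set x₀ := (S.filter (fun i => 0 < m i)).sup' hPos (fun p => (W - c p) / m p) with hx₀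
      rcases lt_trichotomy (m i) 0 with hneg | h0 | hpos
      · have hle : x₀ ≤ (W - c i) / m i := by
          apply Finset.sup'_le
          intro p hp
          rw [Finset.mem_filter] at hp
          exact hkey p hp.1 hp.2 i hiS hneg
        have hne0 : m i ≠ 0 := ne_of_lt hneg
        have h := mul_le_mul_of_nonpos_left hle hneg.le
        have e : m i * ((W - c i) / m i) = W - c i := by field_simp
        rw [e] at h
        linarith
      · have := hzero i hiS h0
        rw [h0]; linarith
      · have hge : (W - c i) / m i ≤ x₀ := by
          rw [hx₀]
          exact Finset.le_sup' (fun p => (W - c p) / m p)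
            (Finset.mem_filter.mpr ⟨hiS, hpos⟩)
        have hne0 : m i ≠ 0 := ne_of_gt hpos
        have h := mul_le_mul_of_nonneg_left hge hpos.le
        have e : m i * ((W - c i) / m i) = W - c i := by field_simp
        rw [e] at h
        linarith
    · have hall : ∀ i ∈ S, m i ≤ 0 := by
        intro i hi
        by_contra h
        push_neg at h
        exact hPos ⟨i, Finset.mem_filter.mpr ⟨hi, h⟩⟩
      by_cases hNeg : (S.filter (fun i => m i < 0)).Nonempty
      · refine ⟨(S.filter (fun i => m i < 0)).inf' hNeg (fun q => (W - c q) / m q), ?_⟩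
        intro i hiS
        set x₀ := (S.filter (fun i => m i < 0)).inf' hNeg (fun q => (W - c q) / m q) with hx₀
        rcases (hall i hiS).lt_or_eq with hneg | h0
        · have hle : x₀ ≤ (W - c i) / m i := by
            rw [hx₀]
            exact Finset.inf'_le (fun q => (W - c q) / m q)
              (Finset.mem_filter.mpr ⟨hiS, hneg⟩)
          have hne0 : m i ≠ 0 := ne_of_lt hneg
          have h := mul_le_mul_of_nonpos_left hle hneg.le
          have e : m i * ((W - c i) / m i) = W - c i := by field_simp
          rw [e] at h
          linarith
        · have := hzero i hiS h0
          rw [h0]; linarith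
      · refine ⟨0, ?_⟩
        intro i hiS
        have h0 : m i = 0 := by
          rcases (hall i hiS).lt_or_eq with h | h
          · exact absurd ⟨i, Finset.mem_filter.mpr ⟨hiS, h⟩⟩ hNeg
          · exact h
        have := hzero i hiS h0
        rw [h0]; linarith
  obtain ⟨x₀, hx₀⟩ := hb
  exact ⟨x₀, fun x => (ha x).trans (Finset.le_inf' hS _ (fun i hi => hx₀ i hi))⟩

/-- Every tropical polynomial function has a unique least-coefficient representative. -/
theorem exists_unique_lcp (r n : ℤ) (hrn : r ≤ n) (a : ℤ → ℚ) :
    ∃ b : ℤ → ℚ,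
      ((∀ j ∈ Finset.Icc r n, ∃ x₀ : ℚ,
          (Finset.Icc r n).inf' (Finset.nonempty_Icc.mpr hrn)
            (fun i => b i + (i : ℚ) * x₀) = b j + (j : ℚ) * x₀) ∧
        (∀ x : ℚ,
          (Finset.Icc r n).inf' (Finset.nonempty_Icc.mpr hrn)
            (fun i => b i + (i : ℚ) * x) =
          (Finset.Icc r n).inf' (Finset.nonempty_Icc.mpr hrn)
            (fun i => a i + (i : ℚ) * x))) ∧
      ∀ b' : ℤ → ℚ,
        ((∀ j ∈ Finset.Icc r n, ∃ x₀ : ℚ,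
            (Finset.Icc r n).inf' (Finset.nonempty_Icc.mpr hrn)
              (fun i => b' i + (i : ℚ) * x₀) = b' j + (j : ℚ) * x₀) ∧
          (∀ x : ℚ,
            (Finset.Icc r n).inf' (Finset.nonempty_Icc.mpr hrn)
              (fun i => b' i + (i : ℚ) * x) =
            (Finset.Icc r n).inf' (Finset.nonempty_Icc.mpr hrn)
              (fun i => a i + (i : ℚ) * x))) →
        ∀ j ∈ Finset.Icc r n, b' j = b j := by
  classical
  have hS : (Finset.Icc r n).Nonempty := Finset.nonempty_Icc.mpr hrn
  set S := Finset.Icc r n with hSdef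
  set f : ℚ → ℚ := fun x => S.inf' hS (fun i => a i + (i : ℚ) * x) with hfdef
  have key : ∀ j : ℤ, ∃ x₀ : ℚ, j ∈ S → ∀ x : ℚ,
      f x - (j : ℚ) * x ≤ f x₀ - (j : ℚ) * x₀ := by
    intro j
    by_cases hj : j ∈ S
    · have hr : r ≤ j := (Finset.mem_Icc.mp hj).1
      have hn : j ≤ n := (Finset.mem_Icc.mp hj).2
      obtain ⟨x₀, hx₀⟩ := attain S hS a (fun i => (i : ℚ) - (j : ℚ))
        ⟨n, Finset.mem_Icc.mpr ⟨hrn, le_refl n⟩, by push_cast; simp; exact_mod_cast hn⟩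
        ⟨r, Finset.mem_Icc.mpr ⟨le_refl r, hrn⟩, by push_cast; simp; exact_mod_cast hr⟩
      have e : ∀ y : ℚ, S.inf' hS (fun i => a i + ((i : ℚ) - (j : ℚ)) * y)
          = f y - (j : ℚ) * y := by
        intro y
        have hfun : (fun i => a i + ((i : ℚ) - (j : ℚ)) * y)
            = fun i => (a i + (i : ℚ) * y) - (j : ℚ) * y := by
          funext i; ring
        rw [hfun, inf'_sub_const]
      refine ⟨x₀, fun _ x => ?_⟩
      rw [← e, ← e]
      exact hx₀ x
    · exact ⟨0, fun h => absurd h hj⟩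
  choose X hX using key
  set b : ℤ → ℚ := fun j => f (X j) - (j : ℚ) * X j with hbdef
  have hP1 : ∀ j ∈ S, ∀ x : ℚ, f x ≤ b j + (j : ℚ) * x := by
    intro j hj x
    have h := hX j hj x
    simp only [hbdef]
    linarith
  have hP3 : ∀ j ∈ S, b j ≤ a j := by
    intro j hj
    have h1 : f (X j) ≤ a j + (j : ℚ) * X j := Finset.inf'_le _ hj
    simp only [hbdef]
    linarith
  have hfb : ∀ x : ℚ, S.inf' hS (fun i => b i + (i : ℚ) * x) = f x := by
    intro x
    apply le_antisymm
    · apply Finset.le_inf'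
      intro i hi
      calc S.inf' hS (fun i => b i + (i : ℚ) * x) ≤ b i + (i : ℚ) * x :=
            Finset.inf'_le _ hi
        _ ≤ a i + (i : ℚ) * x := by have := hP3 i hi; linarith
    · apply Finset.le_inf'
      intro i hi
      exact hP1 i hi x
  have hfXb : ∀ j : ℤ, f (X j) = b j + (j : ℚ) * X j := by
    intro j
    simp only [hbdef]
    ring
  refine ⟨b, ⟨⟨fun j hj => ⟨X j, ?_⟩, fun x => hfb x⟩, ?_⟩⟩
  · exact (hfb (X j)).trans (hfXb j)
  · rintro b' ⟨hb'1, hb'2⟩ j hj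
    obtain ⟨x₁, hx₁⟩ := hb'1 j hj
    have h1 : f x₁ = b' j + (j : ℚ) * x₁ := (hb'2 x₁).symm.trans hx₁
    have h2 : f x₁ - (j : ℚ) * x₁ ≤ f (X j) - (j : ℚ) * X j := hX j hj x₁
    have h3 : f (X j) ≤ b' j + (j : ℚ) * X j :=
      (hb'2 (X j)).symm.trans_le (Finset.inf'_le _ hj)
    simp only [hbdef]
    linarith
end

section
/- Let a_r, ..., a_n ∈ ℚ be coefficients whose consecutive differences d_i = a_{i−1} − a_i are non-decreasing as i decreases, i.e., a_n − a_{n−1} ≥ a_{n−1} − a_{n−2} ≥ ... (equivalently d_n ≤ d_{n−1} ≤ ... ≤ d_{r+1}). Then for each i with r < i < n, setting x₀ = (a_{i−1} − a_{i+1})/2, the minimum min_k (a_k + k·x₀) is attained at k = i. -/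
/-- Under the concavity condition, the minimum at `x₀ = (a (i-1) - a (i+1))/2`
is attained at index `i`. -/
theorem concave_min_attained (r n : ℤ) (hrn : r ≤ n) (a : ℤ → ℚ)
    (hconc : ∀ i : ℤ, r < i → i < n → a (i - 1) - a i ≥ a i - a (i + 1)) :
    ∀ i : ℤ, r < i → i < n →
      (Finset.Icc r n).inf' (Finset.nonempty_Icc.mpr hrn)
        (fun k => a k + (k : ℚ) * ((a (i - 1) - a (i + 1)) / 2)) =
      a i + (i : ℚ) * ((a (i - 1) - a (i + 1)) / 2) := by
  intro i hri hin
  set x₀ : ℚ := (a (i - 1) - a (i + 1)) / 2 with hx₀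
  have hmono : ∀ j : ℤ, r < j → ∀ k : ℤ, j ≤ k → k ≤ n →
      a (k - 1) - a k ≤ a (j - 1) - a j := by
    intro j hrj k hjk
    refine Int.le_induction (motive := fun k _ => k ≤ n →
        a (k - 1) - a k ≤ a (j - 1) - a j) (fun _ => le_refl _) ?_ k hjk
    intro k hjk' ih hkn
    have h1 : a (k + 1 - 1) - a (k + 1) ≤ a (k - 1) - a k := by
      have hc := hconc k (by omega) (by omega)
      have he : k + 1 - 1 = k := by ring
      rw [he]
      linarith
    exact le_trans h1 (ih (by omega))
  have hdix : x₀ ≤ a (i - 1) - a i := by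
    rw [hx₀]; linarith [hconc i hri hin]
  have hdi1x : a i - a (i + 1) ≤ x₀ := by
    rw [hx₀]; linarith [hconc i hri hin]
  have up : ∀ k : ℤ, i ≤ k → k ≤ n → a i + (i : ℚ) * x₀ ≤ a k + (k : ℚ) * x₀ := by
    intro k hik
    refine Int.le_induction (motive := fun k _ => k ≤ n →
        a i + (i : ℚ) * x₀ ≤ a k + (k : ℚ) * x₀) (fun _ => le_refl _) ?_ k hik
    intro k hik' ih hkn
    have hd : a k - a (k + 1) ≤ x₀ := by
      have h1 := hmono (i + 1) (by omega) (k + 1) (by omega) (by omega)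
      have he1 : k + 1 - 1 = k := by ring
      have he2 : i + 1 - 1 = i := by ring
      rw [he1, he2] at h1
      linarith
    have ih' := ih (by omega)
    push_cast
    nlinarith [ih']
  have down : ∀ k : ℤ, k ≤ i → r ≤ k → a i + (i : ℚ) * x₀ ≤ a k + (k : ℚ) * x₀ := by
    intro k hki
    refine Int.le_induction_down (motive := fun k _ => r ≤ k →
        a i + (i : ℚ) * x₀ ≤ a k + (k : ℚ) * x₀) (fun _ => le_refl _) ?_ k hki
    intro k hki' ih hrk
    have hd : x₀ ≤ a (k - 1) - a k := by
      have h1 := hmono k (by omega) i (by omega) (by omega)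
      linarith
    have ih' := ih (by omega)
    push_cast
    nlinarith [ih']
  apply le_antisymm
  · exact Finset.inf'_le _ (Finset.mem_Icc.mpr ⟨le_of_lt hri, le_of_lt hin⟩)
  · apply Finset.le_inf'
    intro k hk
    rw [Finset.mem_Icc] at hk
    rcases le_or_gt i k with h | h
    · exact up k h hk.2
    · exact down k (le_of_lt h) hk.1
end

section
/- A tropical polynomial with finite rational coefficients a_r, ..., a_n is a least-coefficient polynomial if and only if its consecutive differences are concave: a_{i−1} − a_i ≥ a_i − a_{i+1} for all i with r < i < n (equivalently, 2·a_i ≤ a_{i−1} + a_{i+1}). -/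
private lemma d_mono (r n : ℤ) (a : ℤ → ℚ)
    (hc : ∀ i : ℤ, r < i → i < n → a (i - 1) - a i ≥ a i - a (i + 1)) :
    ∀ k l : ℤ, r < k → k ≤ l → l ≤ n → a (l - 1) - a l ≤ a (k - 1) - a k := by
  intro k l hk hkl hln
  obtain ⟨m, hm⟩ : ∃ m : ℕ, l - k = m := ⟨(l - k).toNat, by omega⟩
  induction m generalizing l with
  | zero =>
    have : l = k := by omega
    subst this; exact le_refl _
  | succ m ih =>
    have h1 := hc (l - 1) (by omega) (by omega)
    have h2 := ih (l - 1) (by omega) (by omega) (by omega)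
    have e : l - 1 - 1 = l - 1 - 1 := rfl
    have e2 : l - 1 + 1 = l := by omega
    rw [e2] at h1
    linarith

private lemma step_down (r : ℤ) (a : ℤ → ℚ) (x : ℚ) (j : ℤ)
    (hx : ∀ k, r < k → k ≤ j → x ≤ a (k - 1) - a k) :
    ∀ i, r ≤ i → i ≤ j → a j + (j : ℚ) * x ≤ a i + (i : ℚ) * x := by
  intro i hri hij
  obtain ⟨m, hm⟩ : ∃ m : ℕ, j - i = m := ⟨(j - i).toNat, by omega⟩
  induction m generalizing i with
  | zero =>
    have : i = j := by omega
    subst this; exact le_refl _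
  | succ m ih =>
    have h1 := ih (i + 1) (by omega) (by omega) (by omega)
    have h2 := hx (i + 1) (by omega) (by omega)
    simp only [add_sub_cancel_right] at h2
    have hcast : ((i + 1 : ℤ) : ℚ) = (i : ℚ) + 1 := by push_cast; ring
    rw [hcast] at h1
    nlinarith [h1, h2]

private lemma step_up (n : ℤ) (a : ℤ → ℚ) (x : ℚ) (j : ℤ)
    (hx : ∀ k, j ≤ k → k < n → a k - a (k + 1) ≤ x) :
    ∀ i, j ≤ i → i ≤ n → a j + (j : ℚ) * x ≤ a i + (i : ℚ) * x := by
  intro i hji hin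
  obtain ⟨m, hm⟩ : ∃ m : ℕ, i - j = m := ⟨(i - j).toNat, by omega⟩
  induction m generalizing i with
  | zero =>
    have : i = j := by omega
    subst this; exact le_refl _
  | succ m ih =>
    have h1 := ih (i - 1) (by omega) (by omega) (by omega)
    have h2 := hx (i - 1) (by omega) (by omega)
    have e2 : i - 1 + 1 = i := by omega
    rw [e2] at h2
    have hcast : ((i - 1 : ℤ) : ℚ) = (i : ℚ) - 1 := by push_cast; ring
    rw [hcast] at h1
    nlinarith [h1, h2]

/-- A tropical polynomial is a least-coefficient polynomial iff its consecutive
differences are concave. -/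
theorem lcp_iff_concave (r n : ℤ) (hrn : r ≤ n) (a : ℤ → ℚ) :
    (∀ j ∈ Finset.Icc r n, ∃ x₀ : ℚ,
      (Finset.Icc r n).inf' (Finset.nonempty_Icc.mpr hrn)
        (fun i => a i + (i : ℚ) * x₀) = a j + (j : ℚ) * x₀) ↔
    (∀ i : ℤ, r < i → i < n → a (i - 1) - a i ≥ a i - a (i + 1)) := by
  constructor
  · intro h i hri hin
    obtain ⟨x₀, hx⟩ := h i (Finset.mem_Icc.mpr ⟨le_of_lt hri, le_of_lt hin⟩)
    have h1 := Finset.inf'_le (f := fun i => a i + (i : ℚ) * x₀)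
      
      (Finset.mem_Icc.mpr (⟨by omega, by omega⟩ : r ≤ i - 1 ∧ i - 1 ≤ n))
    have h2 := Finset.inf'_le (f := fun i => a i + (i : ℚ) * x₀)
      
      (Finset.mem_Icc.mpr (⟨by omega, by omega⟩ : r ≤ i + 1 ∧ i + 1 ≤ n))
    rw [hx] at h1 h2
    have c1 : ((i - 1 : ℤ) : ℚ) = (i : ℚ) - 1 := by push_cast; ring
    have c2 : ((i + 1 : ℤ) : ℚ) = (i : ℚ) + 1 := by push_cast; ring
    rw [c1] at h1
    rw [c2] at h2
    nlinarith [h1, h2]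
  · intro hc j hj
    rw [Finset.mem_Icc] at hj
    by_cases hjn : j < n
    · refine ⟨a j - a (j + 1), ?_⟩
      apply le_antisymm
      · exact Finset.inf'_le _ (Finset.mem_Icc.mpr hj)
      · apply Finset.le_inf'
        intro i hi
        rw [Finset.mem_Icc] at hi
        rcases le_or_gt i j with h | h
        · refine step_down r a _ j (fun k hk1 hk2 => ?_) i hi.1 h
          have := d_mono r n a hc k (j + 1) hk1 (by omega) (by omega)
          simpa using this
        · refine step_up n a _ j (fun k hk1 hk2 => ?_) i h.le hi.2
          have := d_mono r n a hc (j + 1) (k + 1) (by omega) (by omega) (by omega)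
          simpa using this
    · have hj' : j = n := by omega
      by_cases hrn' : r < n
      · refine ⟨a (j - 1) - a j, ?_⟩
        apply le_antisymm
        · exact Finset.inf'_le _ (Finset.mem_Icc.mpr hj)
        · apply Finset.le_inf'
          intro i hi
          rw [Finset.mem_Icc] at hi
          refine step_down r a _ j (fun k hk1 hk2 => ?_) i hi.1 (by omega)
          exact d_mono r n a hc k j hk1 hk2 (by omega)
      · refine ⟨0, ?_⟩
        apply le_antisymm
        · exact Finset.inf'_le _ (Finset.mem_Icc.mpr hj)
        · apply Finset.le_inf'
          intro i hi
          rw [Finset.mem_Icc] at hi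
          have : i = j := by omega
          subst this; exact le_refl _
end

section
/- Let a_r, ..., a_n ∈ ℚ satisfy the concavity condition a_{i−1} − a_i ≥ a_i − a_{i+1} for r < i < n, and set d_i = a_{i−1} − a_i. Then for all x ∈ ℚ, min_{r ≤ i ≤ n} (a_i + i·x) = a_n + r·x + Σ_{i=r+1}^{n} min(x, d_i). That is, the least-coefficient tropical polynomial factors as the tropical product of linear factors a_n ⊙ x^r ⊙ (x ⊕ d_n) ⊙ ... ⊙ (x ⊕ d_{r+1}). -/
private lemma trop_aux (r : ℤ) (a : ℤ → ℚ) (x : ℚ) :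
    ∀ k : ℕ, ∀ n : ℤ, ∀ hrn : r ≤ n, n - r = k →
      (∀ i : ℤ, r < i → i < n → a (i - 1) - a i ≥ a i - a (i + 1)) →
      (Finset.Icc r n).inf' (Finset.nonempty_Icc.mpr hrn)
        (fun i => a i + (i : ℚ) * x) =
      a n + (r : ℚ) * x + ∑ i ∈ Finset.Icc (r + 1) n, min x (a (i - 1) - a i) := by
  intro k
  induction k with
  | zero =>
    intro n hrn hk _
    obtain rfl : r = n := by omega
    have he : Finset.Icc (r + 1) r = ∅ := Finset.Icc_eq_empty (by omega)
    simp [Finset.Icc_self, he]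
  | succ k ihk =>
    intro m hrm hk hconc
    obtain ⟨n, rfl⟩ : ∃ n, m = n + 1 := ⟨m - 1, by omega⟩
    have hn : r ≤ n := by omega
    have hconc' : ∀ i : ℤ, r < i → i < n → a (i - 1) - a i ≥ a i - a (i + 1) :=
      fun i h1 h2 => hconc i h1 (by omega)
    have ih := ihk n hn (by omega) hconc'
    have hins : Finset.Icc r (n + 1) = insert (n + 1) (Finset.Icc r n) := by
      ext j; simp only [Finset.mem_Icc, Finset.mem_insert]; omega
    have hsum : Finset.Icc (r + 1) (n + 1) = insert (n + 1) (Finset.Icc (r + 1) n) := by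
      ext j; simp only [Finset.mem_Icc, Finset.mem_insert]; omega
    set S := ∑ i ∈ Finset.Icc (r + 1) n, min x (a (i - 1) - a i) with hS
    have hmono : ∀ i : ℤ, r < i → i ≤ n + 1 → a n - a (n + 1) ≤ a (i - 1) - a i := by
      intro i hri hin
      have key : ∀ l : ℕ, ∀ j : ℤ, j = i + l → j ≤ n + 1 →
          a (j - 1) - a j ≤ a (i - 1) - a i := by
        intro l
        induction l with
        | zero =>
          intro j hj _
          rw [show j = i from by omega]
        | succ l ihl =>
          intro j hj hj1
          obtain ⟨j', rfl⟩ : ∃ j', j = j' + 1 := ⟨j - 1, by omega⟩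
          have h1 : a (j' - 1) - a j' ≤ a (i - 1) - a i := ihl j' (by omega) (by omega)
          have h2 := hconc j' (by omega) (by omega)
          have h3 : (j' + 1 : ℤ) - 1 = j' := by ring
          rw [h3]
          linarith
      have := key (n + 1 - i).toNat (n + 1) (by omega) (le_refl _)
      have hn1 : (n + 1 : ℤ) - 1 = n := by ring
      rwa [hn1] at this
    have hcard : ((Finset.Icc (r + 1) n).card : ℚ) = (n : ℚ) - r := by
      rw [Int.card_Icc]
      have h2 : ((n + 1 - (r + 1)).toNat : ℤ) = n - r := by omega
      exact_mod_cast h2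
    have hS_le : S ≤ ((n : ℚ) - r) * x := by
      calc S ≤ ∑ i ∈ Finset.Icc (r + 1) n, x :=
            Finset.sum_le_sum fun i _ => min_le_left _ _
        _ = ((n : ℚ) - r) * x := by rw [Finset.sum_const, nsmul_eq_mul, hcard]
    simp only [hins, hsum]
    rw [Finset.inf'_insert, ih, Finset.sum_insert (by simp), ← hS]
    have hd : (n + 1 : ℤ) - 1 = n := by ring
    rw [hd]
    push_cast
    rcases le_total x (a n - a (n + 1)) with hx | hx
    · have hS_eq : S = ((n : ℚ) - r) * x := by
        rw [hS, Finset.sum_congr rfl (fun i hi => ?_), Finset.sum_const, nsmul_eq_mul, hcard]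
        simp only [Finset.mem_Icc] at hi
        exact min_eq_left (le_trans hx (hmono i (by omega) (by omega)))
      rw [min_eq_left hx, hS_eq]
      rcases le_total (a (n + 1) + ((n : ℚ) + 1) * x) (a n + (r : ℚ) * x + ((n : ℚ) - r) * x)
        with h | h
      · rw [min_eq_left h]; ring
      · rw [min_eq_right h]; linarith
    · rw [min_eq_right hx, min_eq_right (by linarith)]
      linarith
    exact Finset.nonempty_Icc.mpr hn

/-- Fundamental theorem of tropical algebra (factorization): a least-coefficient
polynomial factors into linear tropical factors with roots the consecutive
differences. -/
theorem tropical_factorization (r n : ℤ) (hrn : r ≤ n) (a : ℤ → ℚ)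
    (hconc : ∀ i : ℤ, r < i → i < n → a (i - 1) - a i ≥ a i - a (i + 1)) :
    ∀ x : ℚ,
      (Finset.Icc r n).inf' (Finset.nonempty_Icc.mpr hrn)
        (fun i => a i + (i : ℚ) * x) =
      a n + (r : ℚ) * x + ∑ i ∈ Finset.Icc (r + 1) n, min x (a (i - 1) - a i) :=
  fun x => trop_aux r a x (n - r).toNat n hrn (Int.toNat_of_nonneg (by omega)).symm hconc
end

section
/- The tropical factorization of a least-coefficient polynomial is unique: if a_r, ..., a_n ∈ ℚ and c ∈ ℚ, d'_n ≤ d'_{n−1} ≤ ... ≤ d'_{r+1} are rationals such that for all x ∈ ℚ, min_{r ≤ i ≤ n} (a_i + i·x) = c + r·x + Σ_{i=r+1}^{n} min(x, d'_i), and the a_i satisfy the concavity condition a_{i−1} − a_i ≥ a_i − a_{i+1}, then c = a_n and d'_i = a_{i−1} − a_i for all i. -/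
private lemma Icc_int_succ_right (r m : ℤ) (h : r ≤ m + 1) :
    Finset.Icc r (m + 1) = insert (m + 1) (Finset.Icc r m) := by
  ext i
  simp only [Finset.mem_Icc, Finset.mem_insert]
  omega

private lemma Icc_int_split (r m n : ℤ) (h1 : r ≤ m) (h2 : m ≤ n) :
    Finset.Icc (r + 1) n = Finset.Icc (r + 1) m ∪ Finset.Icc (m + 1) n := by
  ext i
  simp only [Finset.mem_Icc, Finset.mem_union]
  omega

private lemma Icc_int_disj (r m n : ℤ) :
    Disjoint (Finset.Icc (r + 1) m) (Finset.Icc (m + 1) n) := by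
  rw [Finset.disjoint_left]
  intro i hi hi'
  rw [Finset.mem_Icc] at hi hi'
  omega

private lemma delta_antitone (r n : ℤ) (a : ℤ → ℚ)
    (hconc : ∀ i : ℤ, r < i → i < n → a (i - 1) - a i ≥ a i - a (i + 1)) :
    ∀ i j : ℤ, r + 1 ≤ i → i ≤ j → j ≤ n → a (j - 1) - a j ≤ a (i - 1) - a i := by
  intro i j hi hij
  refine Int.le_induction
    (motive := fun j _ => j ≤ n → a (j - 1) - a j ≤ a (i - 1) - a i) ?_ ?_ j hij
  · intro _; exact le_rfl
  · intro j hj ih hj1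
    have h1 : a j - a (j + 1) ≤ a (j - 1) - a j := hconc j (by omega) (by omega)
    have h2 : a (j + 1 - 1) - a (j + 1) = a j - a (j + 1) := by norm_num
    rw [h2]
    exact le_trans h1 (ih (by omega))

private lemma card_Icc_rat (r m : ℤ) (h : r ≤ m) :
    ((Finset.Icc (r + 1) m).card : ℚ) = (m : ℚ) - (r : ℚ) := by
  rw [Int.card_Icc]
  have h2 : ((m + 1 - (r + 1)).toNat : ℤ) = m - r := by omega
  have h3 : ((m + 1 - (r + 1)).toNat : ℚ) = ((m - r : ℤ) : ℚ) := by
    exact_mod_cast congrArg (fun z : ℤ => (z : ℚ)) h2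
  rw [h3]
  push_cast
  ring

private lemma formulaA (r : ℤ) (a : ℤ → ℚ) (x : ℚ) (n : ℤ) (hrn : r ≤ n)
    (hmono : ∀ i j : ℤ, r + 1 ≤ i → i ≤ j → j ≤ n → a (j - 1) - a j ≤ a (i - 1) - a i) :
    (Finset.Icc r n).inf' (Finset.nonempty_Icc.mpr hrn) (fun i => a i + (i : ℚ) * x)
      = a n + (r : ℚ) * x + ∑ i ∈ Finset.Icc (r + 1) n, min x (a (i - 1) - a i) := by
  refine Int.le_induction
    (motive := fun k _ => ∀ hk : r ≤ k,
      (∀ i j : ℤ, r + 1 ≤ i → i ≤ j → j ≤ k → a (j - 1) - a j ≤ a (i - 1) - a i) →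
      (Finset.Icc r k).inf' (Finset.nonempty_Icc.mpr hk) (fun i => a i + (i : ℚ) * x)
        = a k + (r : ℚ) * x + ∑ i ∈ Finset.Icc (r + 1) k, min x (a (i - 1) - a i))
    ?_ ?_ n hrn hrn hmono
  · intro hk _
    simp only [Finset.Icc_self, Finset.inf'_singleton,
      Finset.Icc_eq_empty (show ¬ r + 1 ≤ r by omega), Finset.sum_empty]
    ring
  · intro m hm ih hk hmono
    have ihm := ih hm (fun i j hi hij hj => hmono i j hi hij (by omega))
    have hins : Finset.Icc r (m + 1) = insert (m + 1) (Finset.Icc r m) :=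
      Icc_int_succ_right r m (by omega)
    have hins2 : Finset.Icc (r + 1) (m + 1) = insert (m + 1) (Finset.Icc (r + 1) m) :=
      Icc_int_succ_right (r + 1) m (by omega)
    have hnotmem : (m + 1 : ℤ) ∉ Finset.Icc (r + 1) m := by
      rw [Finset.mem_Icc]; omega
    have hmin : (Finset.Icc r (m + 1)).inf' (Finset.nonempty_Icc.mpr hk)
          (fun i => a i + (i : ℚ) * x)
        = min (a (m + 1) + ((m + 1 : ℤ) : ℚ) * x)
          ((Finset.Icc r m).inf' (Finset.nonempty_Icc.mpr hm)
            (fun i => a i + (i : ℚ) * x)) := by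
      simp only [hins]
      rw [Finset.inf'_insert (H := Finset.nonempty_Icc.mpr hm)]
    rw [hmin, ihm, hins2, Finset.sum_insert hnotmem]
    have hdel : a (m + 1 - 1) - a (m + 1) = a m - a (m + 1) := by norm_num
    rw [hdel]
    have hcard := card_Icc_rat r m hm
    rcases le_or_gt x (a m - a (m + 1)) with hle | hlt
    · have hsum : ∑ i ∈ Finset.Icc (r + 1) m, min x (a (i - 1) - a i)
          = ∑ i ∈ Finset.Icc (r + 1) m, x := by
        refine Finset.sum_congr rfl fun i hi => ?_
        rw [Finset.mem_Icc] at hi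
        have := hmono i (m + 1) hi.1 (by omega) le_rfl
        rw [hdel] at this
        exact min_eq_left (le_trans hle this)
      rw [hsum, Finset.sum_const, nsmul_eq_mul, hcard, min_eq_left hle]
      have hminle : a (m + 1) + ((m + 1 : ℤ) : ℚ) * x ≤ a m + (r : ℚ) * x
          + ((m : ℚ) - (r : ℚ)) * x := by
        push_cast
        nlinarith [hle]
      rw [min_eq_left hminle]
      push_cast
      ring
    · rw [min_eq_right hlt.le]
      have hsumle : ∑ i ∈ Finset.Icc (r + 1) m, min x (a (i - 1) - a i)
          ≤ ∑ i ∈ Finset.Icc (r + 1) m, x :=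
        Finset.sum_le_sum fun i _ => min_le_left _ _
      rw [Finset.sum_const, nsmul_eq_mul, hcard] at hsumle
      have hminr : min (a (m + 1) + ((m + 1 : ℤ) : ℚ) * x)
          (a m + (r : ℚ) * x + ∑ i ∈ Finset.Icc (r + 1) m, min x (a (i - 1) - a i))
          = a m + (r : ℚ) * x + ∑ i ∈ Finset.Icc (r + 1) m, min x (a (i - 1) - a i) := by
        apply min_eq_right
        push_cast
        nlinarith [hsumle, hlt]
      rw [hminr]
      ring

private lemma head_le (m n : ℤ) (hmn : m + 1 ≤ n) (d e : ℤ → ℚ)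
    (hd : ∀ i, m + 1 ≤ i → i ≤ n → d i ≤ d (m + 1))
    (he : ∀ i, m + 1 ≤ i → i ≤ n → e i ≤ e (m + 1))
    (h : ∀ x : ℚ, ∑ i ∈ Finset.Icc (m + 1) n, min x (d i)
        = ∑ i ∈ Finset.Icc (m + 1) n, min x (e i)) :
    d (m + 1) ≤ e (m + 1) := by
  by_contra hlt
  push_neg at hlt
  have hmem : (m + 1 : ℤ) ∈ Finset.Icc (m + 1) n := by
    rw [Finset.mem_Icc]; omega
  have h1 := h (d (m + 1))
  have hL1 : ∑ i ∈ Finset.Icc (m + 1) n, min (d (m + 1)) (d i)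
      = ∑ i ∈ Finset.Icc (m + 1) n, d i :=
    Finset.sum_congr rfl fun i hi => by
      rw [Finset.mem_Icc] at hi
      exact min_eq_right (hd i hi.1 hi.2)
  have hR1 : ∑ i ∈ Finset.Icc (m + 1) n, min (d (m + 1)) (e i)
      = ∑ i ∈ Finset.Icc (m + 1) n, e i :=
    Finset.sum_congr rfl fun i hi => by
      rw [Finset.mem_Icc] at hi
      exact min_eq_right (le_trans (he i hi.1 hi.2) hlt.le)
  rw [hL1, hR1] at h1
  have h2 := h (e (m + 1))
  have hR2 : ∑ i ∈ Finset.Icc (m + 1) n, min (e (m + 1)) (e i)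
      = ∑ i ∈ Finset.Icc (m + 1) n, e i :=
    Finset.sum_congr rfl fun i hi => by
      rw [Finset.mem_Icc] at hi
      exact min_eq_right (he i hi.1 hi.2)
  rw [hR2] at h2
  have hstrict : ∑ i ∈ Finset.Icc (m + 1) n, min (e (m + 1)) (d i)
      < ∑ i ∈ Finset.Icc (m + 1) n, d i := by
    apply Finset.sum_lt_sum (fun i _ => min_le_right _ _)
    exact ⟨m + 1, hmem, by rw [min_eq_left hlt.le]; exact hlt⟩
  rw [h2, ← h1] at hstrict
  exact lt_irrefl _ hstrict

private lemma uniq (r n : ℤ) (d e : ℤ → ℚ)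
    (hd : ∀ i j, r + 1 ≤ i → i ≤ j → j ≤ n → d j ≤ d i)
    (he : ∀ i j, r + 1 ≤ i → i ≤ j → j ≤ n → e j ≤ e i)
    (h : ∀ x : ℚ, ∑ i ∈ Finset.Icc (r + 1) n, min x (d i)
        = ∑ i ∈ Finset.Icc (r + 1) n, min x (e i)) :
    ∀ k, r + 1 ≤ k → k ≤ n → d k = e k := by
  have key : ∀ m, r ≤ m → ∀ k, r + 1 ≤ k → k ≤ m → k ≤ n → d k = e k := by
    refine Int.le_induction ?_ ?_
    · intro k h1 h2 _; omega
    · intro m hm ih k hk1 hk2 hkn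
      by_cases hkm : k ≤ m
      · exact ih k hk1 hkm hkn
      · have hk : k = m + 1 := by omega
        subst hk
        have htail : ∀ x : ℚ, ∑ i ∈ Finset.Icc (m + 1) n, min x (d i)
            = ∑ i ∈ Finset.Icc (m + 1) n, min x (e i) := by
          intro x
          have hsplit : ∀ f : ℤ → ℚ, ∑ i ∈ Finset.Icc (r + 1) n, f i
              = (∑ i ∈ Finset.Icc (r + 1) m, f i) + ∑ i ∈ Finset.Icc (m + 1) n, f i := by
            intro f
            rw [Icc_int_split r m n hm (by omega), Finset.sum_union (Icc_int_disj r m n)]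
          have hx := h x
          rw [hsplit (fun i => min x (d i)), hsplit (fun i => min x (e i))] at hx
          have hhead : ∑ i ∈ Finset.Icc (r + 1) m, min x (d i)
              = ∑ i ∈ Finset.Icc (r + 1) m, min x (e i) :=
            Finset.sum_congr rfl fun i hi => by
              rw [Finset.mem_Icc] at hi
              rw [ih i hi.1 hi.2 (by omega)]
          rw [hhead] at hx
          linarith
        have hle1 : d (m + 1) ≤ e (m + 1) :=
          head_le m n hkn d e (fun i h1 h2 => hd (m + 1) i hk1 h1 h2)
            (fun i h1 h2 => he (m + 1) i hk1 h1 h2) htail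
        have hle2 : e (m + 1) ≤ d (m + 1) :=
          head_le m n hkn e d (fun i h1 h2 => he (m + 1) i hk1 h1 h2)
            (fun i h1 h2 => hd (m + 1) i hk1 h1 h2) (fun x => (htail x).symm)
        exact le_antisymm hle1 hle2
  intro k h1 h2
  exact key n (by omega) k h1 h2 h2

/-- Uniqueness of the tropical factorization of a least-coefficient polynomial. -/
theorem tropical_factorization_unique (r n : ℤ) (hrn : r ≤ n) (a : ℤ → ℚ)
    (hconc : ∀ i : ℤ, r < i → i < n → a (i - 1) - a i ≥ a i - a (i + 1))
    (c : ℚ) (d' : ℤ → ℚ)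
    (hd' : ∀ i j : ℤ, r + 1 ≤ i → i ≤ j → j ≤ n → d' j ≤ d' i)
    (hfac : ∀ x : ℚ,
      (Finset.Icc r n).inf' (Finset.nonempty_Icc.mpr hrn)
        (fun i => a i + (i : ℚ) * x) =
      c + (r : ℚ) * x + ∑ i ∈ Finset.Icc (r + 1) n, min x (d' i)) :
    c = a n ∧ ∀ i ∈ Finset.Icc (r + 1) n, d' i = a (i - 1) - a i := by
  have hmono := delta_antitone r n a hconc
  have hF : ∀ x : ℚ, a n + (r : ℚ) * x + ∑ i ∈ Finset.Icc (r + 1) n, min x (a (i - 1) - a i)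
      = c + (r : ℚ) * x + ∑ i ∈ Finset.Icc (r + 1) n, min x (d' i) :=
    fun x => (formulaA r a x n hrn hmono).symm.trans (hfac x)
  set x0 : ℚ := min (a (n - 1) - a n) (d' n) with hx0
  have hconst1 : ∑ i ∈ Finset.Icc (r + 1) n, min x0 (a (i - 1) - a i)
      = ∑ i ∈ Finset.Icc (r + 1) n, x0 :=
    Finset.sum_congr rfl fun i hi => by
      rw [Finset.mem_Icc] at hi
      exact min_eq_left (le_trans (min_le_left _ _) (hmono i n hi.1 hi.2 le_rfl))
  have hconst2 : ∑ i ∈ Finset.Icc (r + 1) n, min x0 (d' i)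
      = ∑ i ∈ Finset.Icc (r + 1) n, x0 :=
    Finset.sum_congr rfl fun i hi => by
      rw [Finset.mem_Icc] at hi
      exact min_eq_left (le_trans (min_le_right _ _) (hd' i n hi.1 hi.2 le_rfl))
  have hc : c = a n := by
    have := hF x0
    rw [hconst1, hconst2] at this
    linarith
  refine ⟨hc, fun i hi => ?_⟩
  rw [Finset.mem_Icc] at hi
  have hsum : ∀ x : ℚ, ∑ i ∈ Finset.Icc (r + 1) n, min x (a (i - 1) - a i)
      = ∑ i ∈ Finset.Icc (r + 1) n, min x (d' i) := by
    intro x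
    have := hF x
    rw [hc] at this
    linarith
  exact (uniq r n (fun i => a (i - 1) - a i) d' hmono hd' hsum i hi.1 hi.2).symm
end

section
/- Let a_r, ..., a_n ∈ ℚ satisfy the concavity condition a_{i−1} − a_i ≥ a_i − a_{i+1} for r < i < n, and let d ∈ ℚ. If d = a_{i−1} − a_i for some i with r < i ≤ n, then at x = d the minimum min_k (a_k + k·d) is attained simultaneously at the indices k = i and k = i−1. -/
/-- At a consecutive difference `d = a (i-1) - a i` of a least-coefficient
polynomial, the minimum is attained at both `i` and `i - 1`. -/
theorem root_attains_min_twice (r n : ℤ) (hrn : r ≤ n) (a : ℤ → ℚ)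
    (hconc : ∀ i : ℤ, r < i → i < n → a (i - 1) - a i ≥ a i - a (i + 1))
    (i : ℤ) (hri : r < i) (hin : i ≤ n) (d : ℚ) (hd : d = a (i - 1) - a i) :
    (Finset.Icc r n).inf' (Finset.nonempty_Icc.mpr hrn)
      (fun k => a k + (k : ℚ) * d) = a i + (i : ℚ) * d ∧
    (Finset.Icc r n).inf' (Finset.nonempty_Icc.mpr hrn)
      (fun k => a k + (k : ℚ) * d) = a (i - 1) + ((i : ℚ) - 1) * d := by
  -- differences are antitone
  have hD : ∀ j : ℤ, r ≤ j → ∀ k : ℤ, j ≤ k → k ≤ n - 1 →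
      a k - a (k + 1) ≤ a j - a (j + 1) := by
    intro j hrj
    refine Int.le_induction (motive := fun k _ => k ≤ n - 1 →
      a k - a (k + 1) ≤ a j - a (j + 1)) (fun _ => le_refl _) ?_
    intro k hk ih hkn
    have h := hconc (k + 1) (by omega) (by omega)
    simp only [add_sub_cancel_right] at h
    calc a (k + 1) - a (k + 1 + 1) ≤ a k - a (k + 1) := h
      _ ≤ a j - a (j + 1) := ih (by omega)
  have hup : ∀ k : ℤ, i ≤ k → k ≤ n → a i + (i : ℚ) * d ≤ a k + (k : ℚ) * d := by
    refine Int.le_induction (motive := fun k _ => k ≤ n →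
      a i + (i : ℚ) * d ≤ a k + (k : ℚ) * d) (fun _ => le_refl _) ?_
    intro k hk ih hkn
    have h1 : a k - a (k + 1) ≤ a (i - 1) - a (i - 1 + 1) :=
      hD (i - 1) (by omega) k (by omega) (by omega)
    simp only [sub_add_cancel] at h1
    have h2 := ih (by omega)
    have h3 : a k + (k : ℚ) * d ≤ a (k + 1) + ((k : ℚ) + 1) * d := by
      rw [hd]; linarith
    push_cast
    linarith
  have hdown : ∀ k : ℤ, k ≤ i → r ≤ k → a i + (i : ℚ) * d ≤ a k + (k : ℚ) * d := by
    refine Int.le_induction_down (motive := fun k _ => r ≤ k →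
      a i + (i : ℚ) * d ≤ a k + (k : ℚ) * d) (fun _ => le_refl _) ?_
    intro k hk ih hrk
    have h1 : a (i - 1) - a (i - 1 + 1) ≤ a (k - 1) - a (k - 1 + 1) :=
      hD (k - 1) (by omega) (i - 1) (by omega) (by omega)
    simp only [sub_add_cancel] at h1
    have h2 := ih (by omega)
    have h3 : a k + (k : ℚ) * d ≤ a (k - 1) + ((k : ℚ) - 1) * d := by
      rw [hd]; linarith
    push_cast
    linarith
  have hmin : ∀ k ∈ Finset.Icc r n, a i + (i : ℚ) * d ≤ a k + (k : ℚ) * d := by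
    intro k hk
    rw [Finset.mem_Icc] at hk
    rcases le_or_gt i k with hik | hik
    · exact hup k hik hk.2
    · exact hdown k (by omega) hk.1
  have himem : i ∈ Finset.Icc r n := Finset.mem_Icc.mpr ⟨by omega, hin⟩
  have h1 : (Finset.Icc r n).inf' (Finset.nonempty_Icc.mpr hrn)
      (fun k => a k + (k : ℚ) * d) = a i + (i : ℚ) * d :=
    le_antisymm (Finset.inf'_le _ himem) (Finset.le_inf' _ _ hmin)
  refine ⟨h1, h1.trans ?_⟩
  rw [hd]; ring
end

section
/- Characterization of tropical roots: for a least-coefficient tropical polynomial with coefficients a_r, ..., a_n ∈ ℚ (satisfying a_{i−1} − a_i ≥ a_i − a_{i+1} for r < i < n), a point d ∈ ℚ lies in the tropical zero locus (the minimum of k ↦ a_k + k·d is attained at two or more indices) if and only if d ∈ {a_{i−1} − a_i : r < i ≤ n}. -/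
/-- Monotonicity of consecutive differences under the concavity assumption. -/
theorem trop_delta_mono (r n : ℤ) (a : ℤ → ℚ)
    (hconc : ∀ i : ℤ, r < i → i < n → a (i - 1) - a i ≥ a i - a (i + 1))
    {i j : ℤ} (hri : r < i) (hij : i ≤ j) (hjn : j ≤ n) :
    a (i - 1) - a i ≥ a (j - 1) - a j := by
  refine Int.le_induction (motive := fun j _ => j ≤ n → a (i - 1) - a i ≥ a (j - 1) - a j)
    (fun _ => le_refl _) ?_ j hij hjn
  intro m hm ih hjn'
  have h1 := ih (by omega)
  have h2 := hconc m (by omega) (by omega)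
  have e1 : a (m + 1 - 1) = a m := by norm_num
  rw [e1]
  linarith

/-- If d equals the i-th difference, the value at i is minimal. -/
theorem trop_min (r n : ℤ) (a : ℤ → ℚ)
    (hconc : ∀ i : ℤ, r < i → i < n → a (i - 1) - a i ≥ a i - a (i + 1))
    (d : ℚ) {i : ℤ} (hri : r < i) (hin : i ≤ n) (hd : d = a (i - 1) - a i) :
    ∀ m, r ≤ m → m ≤ n → a m + (m : ℚ) * d ≥ a i + (i : ℚ) * d := by
  have up : ∀ m, i ≤ m → m ≤ n → a m + (m : ℚ) * d ≥ a i + (i : ℚ) * d := by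
    intro m him hmn
    refine Int.le_induction (motive := fun m _ => m ≤ n → a m + (m : ℚ) * d ≥ a i + (i : ℚ) * d)
      (fun _ => le_refl _) ?_ m him hmn
    intro m hm ih hmn'
    have h1 := ih (by omega)
    have h2 := trop_delta_mono r n a hconc hri (show i ≤ m + 1 by omega) hmn'
    have e1 : a (m + 1 - 1) = a m := by norm_num
    rw [e1] at h2
    have : ((m : ℚ) + 1) * d = (m : ℚ) * d + d := by ring
    push_cast
    linarith
  have down : ∀ m, m ≤ i → r ≤ m → a m + (m : ℚ) * d ≥ a i + (i : ℚ) * d := by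
    refine Int.le_induction_down ?_ ?_
    · intro _; exact le_refl _
    · intro m hm ih hrm
      have h1 := ih (by omega)
      have h2 := trop_delta_mono r n a hconc (show r < m by omega) hm hin
      have : ((m : ℚ) - 1) * d = (m : ℚ) * d - d := by ring
      push_cast
      linarith
  intro m hrm hmn
  rcases le_total m i with h | h
  · exact down m h hrm
  · exact up m h hmn

/-- Characterization of the tropical zero locus of a least-coefficient
polynomial: the roots are exactly the consecutive differences. -/
theorem tropical_zero_locus_iff (r n : ℤ) (hrn : r ≤ n) (a : ℤ → ℚ)
    (hconc : ∀ i : ℤ, r < i → i < n → a (i - 1) - a i ≥ a i - a (i + 1))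
    (d : ℚ) :
    (∃ j ∈ Finset.Icc r n, ∃ k ∈ Finset.Icc r n, j ≠ k ∧
      (Finset.Icc r n).inf' (Finset.nonempty_Icc.mpr hrn)
        (fun m => a m + (m : ℚ) * d) = a j + (j : ℚ) * d ∧
      (Finset.Icc r n).inf' (Finset.nonempty_Icc.mpr hrn)
        (fun m => a m + (m : ℚ) * d) = a k + (k : ℚ) * d) ↔
    (∃ i : ℤ, r < i ∧ i ≤ n ∧ d = a (i - 1) - a i) := by
  constructor
  · rintro ⟨j, hj, k, hk, hjk, hinfj, hinfk⟩
    simp only [Finset.mem_Icc] at hj hk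
    -- WLOG j < k
    have key : ∀ p q : ℤ, r ≤ p → p ≤ n → r ≤ q → q ≤ n → p < q →
        (Finset.Icc r n).inf' (Finset.nonempty_Icc.mpr hrn)
          (fun m => a m + (m : ℚ) * d) = a p + (p : ℚ) * d →
        (Finset.Icc r n).inf' (Finset.nonempty_Icc.mpr hrn)
          (fun m => a m + (m : ℚ) * d) = a q + (q : ℚ) * d →
        ∃ i : ℤ, r < i ∧ i ≤ n ∧ d = a (i - 1) - a i := by
      intro p q hrp hpn hrq hqn hpq hinfp hinfq
      have hp1 : a p + (p : ℚ) * d ≤ a (p + 1) + ((p + 1 : ℤ) : ℚ) * d := by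
        rw [← hinfp]
        exact Finset.inf'_le _ (Finset.mem_Icc.mpr ⟨by omega, by omega⟩)
      have hq1 : a q + (q : ℚ) * d ≤ a (q - 1) + ((q - 1 : ℤ) : ℚ) * d := by
        rw [← hinfq]
        exact Finset.inf'_le _ (Finset.mem_Icc.mpr ⟨by omega, by omega⟩)
      -- d ≥ δ_{p+1} and d ≤ δ_q, and δ_{p+1} ≥ δ_q
      have hmono := trop_delta_mono r n a hconc (show r < p + 1 by omega)
        (show p + 1 ≤ q by omega) hqn
      have e1 : a (p + 1 - 1) = a p := by norm_num
      rw [e1] at hmono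
      refine ⟨p + 1, by omega, by omega, ?_⟩
      have e2 : a (p + 1 - 1) = a p := by norm_num
      rw [e2]
      push_cast at hp1 hq1
      linarith
    rcases lt_or_gt_of_ne hjk with h | h
    · exact key j k hj.1 hj.2 hk.1 hk.2 h hinfj hinfk
    · exact key k j hk.1 hk.2 hj.1 hj.2 h hinfk hinfj
  · rintro ⟨i, hri, hin, hd⟩
    have heq : a (i - 1) + ((i - 1 : ℤ) : ℚ) * d = a i + (i : ℚ) * d := by
      push_cast
      linarith [hd]
    have hmin := trop_min r n a hconc d hri hin hd
    have hinf : (Finset.Icc r n).inf' (Finset.nonempty_Icc.mpr hrn)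
        (fun m => a m + (m : ℚ) * d) = a i + (i : ℚ) * d := by
      apply le_antisymm
      · exact Finset.inf'_le _ (Finset.mem_Icc.mpr ⟨by omega, hin⟩)
      · apply Finset.le_inf'
        intro m hm
        rw [Finset.mem_Icc] at hm
        exact hmin m hm.1 hm.2
    exact ⟨i - 1, Finset.mem_Icc.mpr ⟨by omega, by omega⟩, i,
      Finset.mem_Icc.mpr ⟨by omega, hin⟩, by omega, by rw [hinf, heq], hinf⟩
end

section
/- Least coefficients are preserved under passing to the least-coefficient representative: if a_j is a least coefficient of the tropical polynomial f with coefficients a_r, ..., a_n, and b_j = min({a_j} ∪ {(a_i·(k−j) + a_k·(j−i))/(k−i) : r ≤ i < j < k ≤ n}), then b_j = a_j. -/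
/-- If `a j` is a least coefficient, then the least-coefficient formula does
not change it. -/
theorem least_coeff_fixed_by_formula (r n : ℤ) (hrn : r ≤ n) (a : ℤ → ℚ)
    (j : ℤ) (hj : j ∈ Finset.Icc r n)
    (hleast : ∃ x₀ : ℚ,
      (Finset.Icc r n).inf' (Finset.nonempty_Icc.mpr hrn)
        (fun i => a i + (i : ℚ) * x₀) = a j + (j : ℚ) * x₀) :
    (insert (a j)
      ((((Finset.Icc r n) ×ˢ (Finset.Icc r n)).filter
          (fun p => p.1 < j ∧ j < p.2)).image
        (fun p : ℤ × ℤ =>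
          (a p.1 * ((p.2 : ℚ) - (j : ℚ)) + a p.2 * ((j : ℚ) - (p.1 : ℚ))) /
            ((p.2 : ℚ) - (p.1 : ℚ))))).min'
      (Finset.insert_nonempty _ _) = a j := by
  obtain ⟨x₀, hx₀⟩ := hleast
  have key : ∀ i ∈ Finset.Icc r n, a j + (j : ℚ) * x₀ ≤ a i + (i : ℚ) * x₀ := by
    intro i hi
    rw [← hx₀]
    exact Finset.inf'_le _ hi
  apply le_antisymm
  · exact Finset.min'_le _ _ (Finset.mem_insert_self _ _)
  · apply Finset.le_min'
    intro y hy
    rcases Finset.mem_insert.mp hy with h | h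
    · exact h.ge
    · obtain ⟨⟨i, k⟩, hmem, rfl⟩ := Finset.mem_image.mp h
      rw [Finset.mem_filter, Finset.mem_product] at hmem
      obtain ⟨⟨hi, hk⟩, hij, hjk⟩ := hmem
      have h1 := key i hi
      have h2 := key k hk
      have hij' : (i : ℚ) < (j : ℚ) := by exact_mod_cast hij
      have hjk' : (j : ℚ) < (k : ℚ) := by exact_mod_cast hjk
      have hki : (0 : ℚ) < (k : ℚ) - (i : ℚ) := by linarith
      have hkj : (0 : ℚ) < (k : ℚ) - (j : ℚ) := by linarith
      have hji : (0 : ℚ) < (j : ℚ) - (i : ℚ) := by linarith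
      rw [le_div_iff₀ hki]
      nlinarith [mul_le_mul_of_nonneg_right h1 hkj.le,
        mul_le_mul_of_nonneg_right h2 hji.le]
end
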